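/- Let l ≥ 4. Realize the root system Φ of type D_l concretely as Φ = {±eᵢ ± eⱼ : 1 ≤ i < j ≤ l} ⊂ ℚˡ with the standard inner product ⟨·,·⟩, let δ = e₁ + e₂ be the maximal root, Φ₀ = {α ∈ Φ : ⟨α, δ⟩ = 0}, Φ₁ = {α ∈ Φ : ⟨α, δ⟩ = 1}, and let W₀ be the group of linear automorphisms of ℚˡ generated by the reflections s_α : x ↦ x − 2(⟨x,α⟩/⟨α,α⟩)α for α ∈ Φ₀. Then W₀ acts transitively on Φ₁. -/

import Mathlib

/-- The standard inner product on `ℚˡ`. -/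
def ip {l : ℕ} (x y : Fin l → ℚ) : ℚ := ∑ i, x i * y i

/-- The standard basis vector `eᵢ` of `ℚˡ`. -/
def ev {l : ℕ} (i : Fin l) : Fin l → ℚ := Pi.single i 1

/-- The root system of type `D_l`: `Φ = {±eᵢ ± eⱼ : i < j}`. -/
def PhiD (l : ℕ) : Set (Fin l → ℚ) :=
  {α | ∃ i j : Fin l, i < j ∧
    (α = ev i + ev j ∨ α = ev i - ev j ∨ α = -ev i + ev j ∨ α = -ev i - ev j)}

/-- The maximal root `δ = e₁ + e₂` of `D_l`. -/
def deltaD (l : ℕ) (hl : 4 ≤ l) : Fin l → ℚ :=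
  ev ⟨0, by omega⟩ + ev ⟨1, by omega⟩

/-- The roots orthogonal to `δ`. -/
def Phi0D (l : ℕ) (hl : 4 ≤ l) : Set (Fin l → ℚ) :=
  {α ∈ PhiD l | ip α (deltaD l hl) = 0}

/-- The roots with `⟨α, δ⟩ = 1`. -/
def Phi1D (l : ℕ) (hl : 4 ≤ l) : Set (Fin l → ℚ) :=
  {α ∈ PhiD l | ip α (deltaD l hl) = 1}

/-- The group `W₀` generated by the reflections `s_α`, `α ∈ Φ₀`. -/
def W0D (l : ℕ) (hl : 4 ≤ l) : Subgroup ((Fin l → ℚ) ≃ₗ[ℚ] (Fin l → ℚ)) :=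
  Subgroup.closure
    {g | ∃ α ∈ Phi0D l hl, ∀ x, g x = x - (2 * ip x α / ip α α) • α}

namespace W0aux
variable {l : ℕ}

lemma ip_ev_right (x : Fin l → ℚ) (j : Fin l) : ip x (ev j) = x j := by
  simp [ip, ev, Pi.single_apply, mul_ite]

lemma ip_add_right (x y z : Fin l → ℚ) : ip x (y + z) = ip x y + ip x z := by
  simp [ip, mul_add, Finset.sum_add_distrib]

lemma ip_sub_right (x y z : Fin l → ℚ) : ip x (y - z) = ip x y - ip x z := by
  simp [ip, mul_sub, Finset.sum_sub_distrib]

lemma ip_smul_right (x y : Fin l → ℚ) (c : ℚ) : ip x (c • y) = c * ip x y := by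
  simp [ip, Finset.mul_sum, mul_left_comm]

lemma ip_comm (x y : Fin l → ℚ) : ip x y = ip y x := by
  simp [ip, mul_comm]

lemma ip_add_left (x y z : Fin l → ℚ) : ip (x + y) z = ip x z + ip y z := by
  rw [ip_comm, ip_add_right, ip_comm z, ip_comm z]

lemma ip_sub_left (x y z : Fin l → ℚ) : ip (x - y) z = ip x z - ip y z := by
  rw [ip_comm, ip_sub_right, ip_comm z, ip_comm z]

lemma ip_smul_left (x y : Fin l → ℚ) (c : ℚ) : ip (c • x) y = c * ip x y := by
  rw [ip_comm, ip_smul_right, ip_comm]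

lemma ev_apply (i k : Fin l) : ev i k = if k = i then 1 else 0 := Pi.single_apply i 1 k

lemma ip_pm (p q : Fin l) (c : ℚ) (x : Fin l → ℚ) :
    ip x (ev p + c • ev q) = x p + c * x q := by
  rw [ip_add_right, ip_smul_right, ip_ev_right, ip_ev_right]

lemma ip_delta (hl : 4 ≤ l) (x : Fin l → ℚ) :
    ip x (deltaD l hl) = x ⟨0, by omega⟩ + x ⟨1, by omega⟩ := by
  rw [deltaD, ip_add_right, ip_ev_right, ip_ev_right]

def S (α : Fin l → ℚ) : (Fin l → ℚ) →ₗ[ℚ] (Fin l → ℚ) where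
  toFun x := x - ip x α • α
  map_add' x y := by
    show x + y - ip (x + y) α • α = (x - ip x α • α) + (y - ip y α • α)
    rw [ip_add_left]; module
  map_smul' c x := by
    show c • x - ip (c • x) α • α = (RingHom.id ℚ) c • (x - ip x α • α)
    rw [ip_smul_left]; simp only [RingHom.id_apply]; module

def sref (α : Fin l → ℚ) (h : ip α α = 2) : (Fin l → ℚ) ≃ₗ[ℚ] (Fin l → ℚ) :=
  LinearEquiv.ofLinear (S α) (S α)
    (by apply LinearMap.ext; intro x
        show S α (S α x) = x
        show (x - ip x α • α) - ip (x - ip x α • α) α • α = x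
        rw [ip_sub_left, ip_smul_left, h]; module)
    (by apply LinearMap.ext; intro x
        show S α (S α x) = x
        show (x - ip x α • α) - ip (x - ip x α • α) α • α = x
        rw [ip_sub_left, ip_smul_left, h]; module)

lemma sref_apply (α : Fin l → ℚ) (h : ip α α = 2) (x : Fin l → ℚ) :
    sref α h x = x - ip x α • α := rfl

lemma sref_mem {hl : 4 ≤ l} (α : Fin l → ℚ) (hα : α ∈ Phi0D l hl) (h : ip α α = 2) :
    sref α h ∈ W0D l hl := by
  apply Subgroup.subset_closure
  refine ⟨α, hα, fun x => ?_⟩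
  have h2 : 2 * ip x α / ip α α = ip x α := by rw [h]; ring
  rw [sref_apply, h2]

lemma norm_pm (p q : Fin l) (hpq : p ≠ q) (c : ℚ) (hc : c = 1 ∨ c = -1) :
    ip (ev p + c • ev q) (ev p + c • ev q) = 2 := by
  rw [ip_pm]
  simp only [Pi.add_apply, Pi.smul_apply, ev_apply, if_pos rfl, if_neg hpq,
    if_neg (Ne.symm hpq), smul_eq_mul]
  rcases hc with rfl | rfl <;> norm_num

lemma mem_PhiD_pm (p q : Fin l) (hpq : p ≠ q) (c : ℚ) (hc : c = 1 ∨ c = -1) :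
    (ev p + c • ev q) ∈ PhiD l := by
  rcases hpq.lt_or_gt with h | h
  · exact ⟨p, q, h, by
      rcases hc with rfl | rfl
      · exact Or.inl (by module)
      · exact Or.inr (Or.inl (by module))⟩
  · exact ⟨q, p, h, by
      rcases hc with rfl | rfl
      · exact Or.inl (by module)
      · exact Or.inr (Or.inr (Or.inl (by module)))⟩


lemma normal_form {hl : 4 ≤ l} (β : Fin l → ℚ) (hβ : β ∈ Phi1D l hl) :
    ∃ (p j : Fin l) (c : ℚ), (p.val = 0 ∨ p.val = 1) ∧ 2 ≤ j.val ∧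
      (c = 1 ∨ c = -1) ∧ β = ev p + c • ev j := by
  obtain ⟨⟨i, j, hij, hcase⟩, hip⟩ := hβ
  have hij' : i.val < j.val := hij
  rw [ip_delta] at hip
  rcases hcase with rfl | rfl | rfl | rfl <;>
    simp only [Pi.add_apply, Pi.sub_apply, Pi.neg_apply, ev_apply, Fin.ext_iff] at hip <;>
    split_ifs at hip <;> norm_num at hip <;>
    first
      | exact ⟨i, j, 1, by omega, by omega, Or.inl rfl, by module⟩
      | exact ⟨i, j, -1, by omega, by omega, Or.inr rfl, by module⟩
      | omega


lemma to_canonical {hl : 4 ≤ l} (β : Fin l → ℚ) (hβ : β ∈ Phi1D l hl) :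
    ∃ w ∈ W0D l hl, w β = ev (⟨0, by omega⟩ : Fin l) + ev ⟨2, by omega⟩ := by
  obtain ⟨p, j, c, hp, hj2, hc, hβeq⟩ := normal_form β hβ
  have h4 : 4 ≤ l := hl
  set i0 : Fin l := ⟨0, by omega⟩ with hi0
  set i1 : Fin l := ⟨1, by omega⟩ with hi1
  set i2 : Fin l := ⟨2, by omega⟩ with hi2
  set i3 : Fin l := ⟨3, by omega⟩ with hi3
  have h01 : i0 ≠ i1 := by simp [hi0, hi1, Fin.ext_iff]
  have hji0 : j ≠ i0 := by simp [hi0, Fin.ext_iff]; omega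
  have hji1 : j ≠ i1 := by simp [hi1, Fin.ext_iff]; omega
  -- Stage 1 : move p to i0
  have stage1 : ∃ w1 ∈ W0D l hl, w1 β = ev i0 + c • ev j := by
    rcases hp with hp0 | hp1
    · have : p = i0 := by simp [hi0, Fin.ext_iff, hp0]
      subst this
      exact ⟨1, one_mem _, by simp [hβeq]⟩
    · have : p = i1 := by simp [hi1, Fin.ext_iff, hp1]
      subst this
      have hn : ip (ev i0 + (-1 : ℚ) • ev i1) (ev i0 + (-1 : ℚ) • ev i1) = 2 :=
        norm_pm _ _ h01 _ (Or.inr rfl)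
      have hmem : (ev i0 + (-1 : ℚ) • ev i1) ∈ Phi0D l hl := by
        refine ⟨mem_PhiD_pm _ _ h01 _ (Or.inr rfl), ?_⟩
        rw [ip_delta hl]
        rw [show (⟨0, by omega⟩ : Fin l) = i0 from rfl, show (⟨1, by omega⟩ : Fin l) = i1 from rfl]
        simp [ev_apply, h01, Ne.symm h01]
      refine ⟨sref _ hn, sref_mem _ hmem hn, ?_⟩
      · have hv : ip (ev i1 + c • ev j) (ev i0 + (-1 : ℚ) • ev i1) = -1 := by
          rw [ip_pm]
          simp [ev_apply, h01, Ne.symm h01, Ne.symm hji0, Ne.symm hji1]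
        rw [hβeq, sref_apply, hv]; module
  obtain ⟨w1, hw1, hw1β⟩ := stage1
  -- Stage 2 : fix the sign
  have stage2 : ∃ w2 ∈ W0D l hl, w2 (ev i0 + c • ev j) = ev i0 + ev j := by
    rcases hc with rfl | rfl
    · exact ⟨1, one_mem _, by simp⟩
    · obtain ⟨m, hm2, hmj⟩ : ∃ m : Fin l, (m = i2 ∨ m = i3) ∧ m ≠ j := by
        by_cases h : j = i2
        · exact ⟨i3, Or.inr rfl, by simp [h, hi2, hi3, Fin.ext_iff]⟩
        · exact ⟨i2, Or.inl rfl, fun hh => h hh.symm⟩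
      have hmval : m.val = 2 ∨ m.val = 3 := by
        rcases hm2 with rfl | rfl
        · left; rfl
        · right; rfl
      have hmi0 : m ≠ i0 := by simp [hi0, Fin.ext_iff]; omega
      have hmi1 : m ≠ i1 := by simp [hi1, Fin.ext_iff]; omega
      have hjm : j ≠ m := Ne.symm hmj
      have hn1 : ip (ev j + (-1 : ℚ) • ev m) (ev j + (-1 : ℚ) • ev m) = 2 :=
        norm_pm _ _ hjm _ (Or.inr rfl)
      have hn2 : ip (ev j + (1 : ℚ) • ev m) (ev j + (1 : ℚ) • ev m) = 2 :=
        norm_pm _ _ hjm _ (Or.inl rfl)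
      have hmem1 : (ev j + (-1 : ℚ) • ev m) ∈ Phi0D l hl := by
        refine ⟨mem_PhiD_pm _ _ hjm _ (Or.inr rfl), ?_⟩
        rw [ip_delta hl]
        rw [show (⟨0, by omega⟩ : Fin l) = i0 from rfl, show (⟨1, by omega⟩ : Fin l) = i1 from rfl]
        simp [ev_apply, Ne.symm hji0, Ne.symm hji1, Ne.symm hmi0, Ne.symm hmi1]
      have hmem2 : (ev j + (1 : ℚ) • ev m) ∈ Phi0D l hl := by
        refine ⟨mem_PhiD_pm _ _ hjm _ (Or.inl rfl), ?_⟩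
        rw [ip_delta hl]
        rw [show (⟨0, by omega⟩ : Fin l) = i0 from rfl, show (⟨1, by omega⟩ : Fin l) = i1 from rfl]
        simp [ev_apply, Ne.symm hji0, Ne.symm hji1, Ne.symm hmi0, Ne.symm hmi1]
      have ht1 : sref _ hn1 (ev i0 + (-1 : ℚ) • ev j) = ev i0 + (-1 : ℚ) • ev m := by
        have hv : ip (ev i0 + (-1 : ℚ) • ev j) (ev j + (-1 : ℚ) • ev m) = -1 := by
          rw [ip_pm]
          simp [ev_apply, hji0, hmi0, hjm, Ne.symm hjm]
        rw [sref_apply, hv]; module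
      have ht2 : sref _ hn2 (ev i0 + (-1 : ℚ) • ev m) = ev i0 + ev j := by
        have hv : ip (ev i0 + (-1 : ℚ) • ev m) (ev j + (1 : ℚ) • ev m) = -1 := by
          rw [ip_pm]
          simp [ev_apply, hji0, hmi0, hjm, Ne.symm hjm]
        rw [sref_apply, hv]; module
      refine ⟨sref _ hn2 * sref _ hn1, mul_mem (sref_mem _ hmem2 hn2) (sref_mem _ hmem1 hn1), ?_⟩
      show sref _ hn2 (sref _ hn1 (ev i0 + (-1 : ℚ) • ev j)) = ev i0 + ev j
      rw [ht1, ht2]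
  obtain ⟨w2, hw2, hw2β⟩ := stage2
  -- Stage 3 : move j to i2
  have stage3 : ∃ w3 ∈ W0D l hl, w3 (ev i0 + ev j) = ev i0 + ev i2 := by
    by_cases hj : j = i2
    · exact ⟨1, one_mem _, by simp [hj]⟩
    · have h2j : i2 ≠ j := Ne.symm hj
      have hjval : j.val ≠ 2 := fun h => hj (by simp [hi2, Fin.ext_iff, h])
      have h2i0 : i2 ≠ i0 := by simp [hi0, hi2, Fin.ext_iff]
      have h2i1 : i2 ≠ i1 := by simp [hi1, hi2, Fin.ext_iff]
      have hn : ip (ev i2 + (-1 : ℚ) • ev j) (ev i2 + (-1 : ℚ) • ev j) = 2 :=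
        norm_pm _ _ h2j _ (Or.inr rfl)
      have hmem : (ev i2 + (-1 : ℚ) • ev j) ∈ Phi0D l hl := by
        refine ⟨mem_PhiD_pm _ _ h2j _ (Or.inr rfl), ?_⟩
        rw [ip_delta hl]
        rw [show (⟨0, by omega⟩ : Fin l) = i0 from rfl, show (⟨1, by omega⟩ : Fin l) = i1 from rfl]
        simp [ev_apply, Ne.symm h2i0, Ne.symm h2i1, Ne.symm hji0, Ne.symm hji1]
      refine ⟨sref _ hn, sref_mem _ hmem hn, ?_⟩
      have hv : ip (ev i0 + ev j) (ev i2 + (-1 : ℚ) • ev j) = -1 := by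
        rw [ip_pm]
        simp [ev_apply, hji0, h2i0, h2j]
      rw [sref_apply, hv]; module
  obtain ⟨w3, hw3, hw3β⟩ := stage3
  refine ⟨w3 * w2 * w1, mul_mem (mul_mem hw3 hw2) hw1, ?_⟩
  show w3 (w2 (w1 β)) = _
  rw [hw1β, hw2β, hw3β]

end W0aux

/-- `W₀` acts transitively on `Φ₁`. -/
theorem W0_transitive_on_Phi1 (l : ℕ) (hl : 4 ≤ l) :
    ∀ β ∈ Phi1D l hl, ∀ γ ∈ Phi1D l hl, ∃ w ∈ W0D l hl, w β = γ := by
  intro β hβ γ hγ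
  obtain ⟨wb, hwb, hb⟩ := W0aux.to_canonical (hl := hl) β hβ
  obtain ⟨wg, hwg, hg⟩ := W0aux.to_canonical (hl := hl) γ hγ
  refine ⟨wg⁻¹ * wb, mul_mem (inv_mem hwg) hwb, ?_⟩
  show wg⁻¹ (wb β) = γ
  rw [hb, ← hg]
  show (wg⁻¹ * wg) γ = γ
  rw [inv_mul_cancel]
  rfl
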